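/- Let X be a closed subset of ℂ^n, let Σ(X) ⊆ ℂ^n denote the closure of the set of secant directions {(x − y)/‖x − y‖ : x, y ∈ X, x ≠ y}, and let π : ℂ^n → ℂ^l be a surjective ℂ-linear map. Then the restriction π|_X is bi-Lipschitz onto its image (i.e., there exists K ≥ 1 with (1/K)·‖x − y‖ ≤ ‖π(x) − π(y)‖ ≤ K·‖x − y‖ for all x, y ∈ X) if and only if Σ(X) ∩ ker π = ∅. -/
import Mathlib


/-- The set of secant directions of `X`: all unit vectors `(x − y)/‖x − y‖` for
`x, y ∈ X`, `x ≠ y`. -/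
def secantDirections {E : Type*} [NormedAddCommGroup E] [NormedSpace ℝ E]
    (X : Set E) : Set E :=
  {v | ∃ x ∈ X, ∃ y ∈ X, x ≠ y ∧ v = ‖x - y‖⁻¹ • (x - y)}

/-- For a closed set `X ⊆ ℂ^n` and a surjective `ℂ`-linear map
`π : ℂ^n → ℂ^l`, the restriction `π|_X` is bi-Lipschitz onto its image if and only if
the closure `Σ(X)` of the set of secant directions of `X` is disjoint from `ker π`. -/
theorem biLipschitz_iff_secant_directions_disjoint_ker {n l : ℕ}
    (X : Set (EuclideanSpace ℂ (Fin n))) (hX : IsClosed X)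
    (π : EuclideanSpace ℂ (Fin n) →ₗ[ℂ] EuclideanSpace ℂ (Fin l))
    (hπ : Function.Surjective π) :
    (∃ K : ℝ, 1 ≤ K ∧ ∀ x ∈ X, ∀ y ∈ X,
        (1 / K) * ‖x - y‖ ≤ ‖π x - π y‖ ∧ ‖π x - π y‖ ≤ K * ‖x - y‖)
      ↔ closure (secantDirections X) ∩ (LinearMap.ker π : Set (EuclideanSpace ℂ (Fin n))) = ∅ := by
  set πL := LinearMap.toContinuousLinearMap π with hπLdef
  have hπLeq : ∀ v, πL v = π v := fun v => rfl
  have hnorm : ∀ x y : EuclideanSpace ℂ (Fin n), x ≠ y →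
      ‖πL (‖x - y‖⁻¹ • (x - y))‖ = ‖x - y‖⁻¹ * ‖π x - π y‖ := by
    intro x y hxy
    rw [ContinuousLinearMap.map_smul_of_tower, norm_smul, map_sub, norm_inv, norm_norm]
    rfl
  constructor
  · rintro ⟨K, hK1, hK⟩
    have hKpos : (0:ℝ) < K := lt_of_lt_of_le one_pos hK1
    have hsub : secantDirections X ⊆ {v | 1/K ≤ ‖πL v‖} := by
      rintro v ⟨x, hx, y, hy, hxy, rfl⟩
      have hne : ‖x - y‖ ≠ 0 := by simp [sub_eq_zero, hxy]
      have hpos : 0 < ‖x - y‖ := lt_of_le_of_ne (norm_nonneg _) (Ne.symm hne)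
      have h1 := (hK x hx y hy).1
      have : 1/K ≤ ‖x - y‖⁻¹ * ‖π x - π y‖ := by
        rw [le_inv_mul_iff₀ hpos, mul_comm]
        linarith [h1]
      rw [Set.mem_setOf_eq, hnorm x y hxy]
      exact this
    have hcl : closure (secantDirections X) ⊆ {v | 1/K ≤ ‖πL v‖} :=
      closure_minimal hsub (isClosed_le continuous_const πL.continuous.norm)
    rw [Set.eq_empty_iff_forall_notMem]
    rintro v ⟨hv1, hv2⟩
    have h1 : 1/K ≤ ‖πL v‖ := hcl hv1
    have h2 : π v = 0 := hv2
    rw [hπLeq, h2, norm_zero] at h1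
    have : (0:ℝ) < 1/K := by positivity
    linarith
  · intro hdisj
    rcases Set.eq_empty_or_nonempty (closure (secantDirections X)) with hC | ⟨v₀, hv₀⟩
    · -- secant directions empty: X has at most one point
      refine ⟨1, le_refl 1, fun x hx y hy => ?_⟩
      by_cases hxy : x = y
      · subst hxy; simp
      · have hm : (‖x - y‖⁻¹ • (x - y)) ∈ closure (secantDirections X) :=
          subset_closure ⟨x, hx, y, hy, hxy, rfl⟩
        rw [hC] at hm
        exact hm.elim
    · have hball : secantDirections X ⊆ Metric.closedBall 0 1 := by
        rintro v ⟨x, hx, y, hy, hxy, rfl⟩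
        have hne : ‖x - y‖ ≠ 0 := by simp [sub_eq_zero, hxy]
        simp [norm_smul, inv_mul_cancel₀ hne]
      have hcomp : IsCompact (closure (secantDirections X)) :=
        (Metric.isCompact_of_isClosed_isBounded isClosed_closure
          ((Metric.isBounded_closedBall).subset
            (closure_minimal hball Metric.isClosed_closedBall)))
      obtain ⟨w, hw, hwmin⟩ := hcomp.exists_isMinOn ⟨v₀, hv₀⟩
        πL.continuous.norm.continuousOn
      have hwker : π w ≠ 0 := by
        intro h
        have : w ∈ closure (secantDirections X) ∩ (LinearMap.ker π : Set _) :=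
          ⟨hw, h⟩
        rw [hdisj] at this
        exact this
      set c := ‖πL w‖ with hc
      have hcpos : 0 < c := by
        rw [hc, hπLeq]
        exact norm_pos_iff.mpr hwker
      refine ⟨max c⁻¹ (max ‖πL‖ 1), le_trans (le_max_right _ _) (le_max_right _ _), ?_⟩
      intro x hx y hy
      set K := max c⁻¹ (max ‖πL‖ 1) with hKdef
      have hKpos : (0:ℝ) < K := lt_of_lt_of_le one_pos
        (le_trans (le_max_right _ _) (le_max_right _ _))
      by_cases hxy : x = y
      · subst hxy; simp
      · have hne : ‖x - y‖ ≠ 0 := by simp [sub_eq_zero, hxy]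
        have hpos : 0 < ‖x - y‖ := lt_of_le_of_ne (norm_nonneg _) (Ne.symm hne)
        have hmem : (‖x - y‖⁻¹ • (x - y)) ∈ closure (secantDirections X) :=
          subset_closure ⟨x, hx, y, hy, hxy, rfl⟩
        have hcle : c ≤ ‖x - y‖⁻¹ * ‖π x - π y‖ := by
          rw [← hnorm x y hxy]; exact hwmin hmem
        constructor
        · have h1K : 1/K ≤ c := by
            rw [div_le_iff₀ hKpos]
            calc (1:ℝ) = c * c⁻¹ := (mul_inv_cancel₀ hcpos.ne').symm
              _ ≤ c * K := by
                  exact mul_le_mul_of_nonneg_left (le_max_left _ _) hcpos.le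
          calc 1/K * ‖x - y‖ ≤ c * ‖x - y‖ :=
                mul_le_mul_of_nonneg_right h1K hpos.le
            _ ≤ ‖π x - π y‖ := by
                have h2 : c * ‖x - y‖ ≤ ‖x - y‖⁻¹ * ‖π x - π y‖ * ‖x - y‖ :=
                  mul_le_mul_of_nonneg_right hcle hpos.le
                rwa [mul_comm (‖x - y‖⁻¹) _, mul_assoc, inv_mul_cancel₀ hne,
                  mul_one] at h2
        · have : ‖π x - π y‖ = ‖πL (x - y)‖ := by rw [map_sub]; rfl
          rw [this]
          calc ‖πL (x - y)‖ ≤ ‖πL‖ * ‖x - y‖ := πL.le_opNorm _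
            _ ≤ K * ‖x - y‖ := mul_le_mul_of_nonneg_right
                (le_trans (le_max_left _ _) (le_max_right _ _)) (norm_nonneg _)
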